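/- Let x ∈ ℝ², let r > 0, let t > 0, let η ∈ (0, t), and let O : ℝ → ℝ² be continuous. Then ∫₀ᵗ ( ∫_{B(O(s), r)} exp(−‖x−y‖²/(t−s)) dy ) / (t−s) ds ≤ π r² ( log t − log η ) + π η, where B(z, r) denotes the open Euclidean ball of center z and radius r in ℝ² and the integrals are Lebesgue integrals. -/

import Mathlib

open MeasureTheory

open Real in
lemma ball_vol2 (z : EuclideanSpace ℝ (Fin 2)) {r : ℝ} (hr : 0 ≤ r) :
    (volume (Metric.ball z r)).toReal = Real.pi * r ^ 2 := by
  rw [EuclideanSpace.volume_ball]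
  rw [ENNReal.toReal_mul, ENNReal.toReal_pow, ENNReal.toReal_ofReal hr]
  simp [Real.sq_sqrt Real.pi_nonneg, Real.Gamma_add_one, Real.Gamma_one]
  rw [ENNReal.toReal_ofReal Real.pi_nonneg]; ring

lemma gauss_int2 {b : ℝ} (hb : 0 < b) :
    Integrable (fun v : EuclideanSpace ℝ (Fin 2) => Real.exp (-b * ‖v‖^2)) := by
  have h := (GaussianFourier.integrable_cexp_neg_mul_sq_norm_add
      (V := EuclideanSpace ℝ (Fin 2)) (b := (b:ℂ)) (by simpa using hb) 0 0).norm
  convert h using 2 with v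
  simp [Complex.norm_exp]
  norm_cast
  exact Or.inl rfl

lemma gauss_eval2 {b : ℝ} (hb : 0 < b) :
    ∫ v : EuclideanSpace ℝ (Fin 2), Real.exp (-b * ‖v‖^2) = Real.pi / b := by
  rw [GaussianFourier.integral_rexp_neg_mul_sq_norm hb]
  norm_num [finrank_euclideanSpace_fin]

/-- Gaussian kernel estimate: splitting the time interval at `t - η`, the
time-weighted integral of the Gaussian over moving balls is bounded by
`π r² (log t - log η) + π η`. -/
theorem stmt_8 (x : EuclideanSpace ℝ (Fin 2)) (r t η : ℝ)
    (hr : 0 < r) (ht : 0 < t) (hη : η ∈ Set.Ioo 0 t)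
    (O : ℝ → EuclideanSpace ℝ (Fin 2)) (hO : Continuous O) :
    (∫ s in (0:ℝ)..t,
        (∫ y in Metric.ball (O s) r, Real.exp (-‖x - y‖ ^ 2 / (t - s))) / (t - s))
      ≤ Real.pi * r ^ 2 * (Real.log t - Real.log η) + Real.pi * η := by
  obtain ⟨hη0, hηt⟩ := hη
  have hlog : Real.log η < Real.log t := Real.log_lt_log hη0 hηt
  have hRHS : 0 < Real.pi * r ^ 2 * (Real.log t - Real.log η) + Real.pi * η := by
    have h1 : 0 < Real.pi * r ^ 2 := by positivity
    have h2 : 0 < Real.pi * η := by positivity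
    nlinarith
  set f : ℝ → ℝ := fun s =>
    (∫ y in Metric.ball (O s) r, Real.exp (-‖x - y‖ ^ 2 / (t - s))) / (t - s) with hf
  by_cases hint : IntervalIntegrable f volume 0 t
  swap
  · rw [intervalIntegral.integral_undef hint]; exact hRHS.le
  -- pointwise bounds
  have bound1 : ∀ s ∈ Set.Icc (0:ℝ) (t - η), f s ≤ Real.pi * r ^ 2 / (t - s) := by
    rintro s ⟨hs0, hs1⟩
    have hts : 0 < t - s := by linarith
    have hI : (∫ y in Metric.ball (O s) r, Real.exp (-‖x - y‖ ^ 2 / (t - s)))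
        ≤ Real.pi * r ^ 2 := by
      calc (∫ y in Metric.ball (O s) r, Real.exp (-‖x - y‖ ^ 2 / (t - s)))
          ≤ ‖∫ y in Metric.ball (O s) r, Real.exp (-‖x - y‖ ^ 2 / (t - s))‖ :=
            le_abs_self _
        _ ≤ 1 * (volume (Metric.ball (O s) r)).toReal := by
            have hcont : Continuous fun y : EuclideanSpace ℝ (Fin 2) =>
                Real.exp (-‖x - y‖ ^ 2 / (t - s)) := by fun_prop
            apply norm_setIntegral_le_of_norm_le_const measure_ball_lt_top ?_
            intro y _
            rw [Real.norm_eq_abs, abs_of_pos (Real.exp_pos _), Real.exp_le_one_iff]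
            have : (0:ℝ) ≤ ‖x - y‖ ^ 2 := by positivity
            exact div_nonpos_of_nonpos_of_nonneg (by linarith) hts.le
        _ = Real.pi * r ^ 2 := by rw [one_mul, ball_vol2 _ hr.le]
    rw [hf]
    exact div_le_div_of_nonneg_right hI hts.le
  have bound2 : ∀ s ∈ Set.Icc (t - η) t, f s ≤ Real.pi := by
    rintro s ⟨hs0, hs1⟩
    rcases eq_or_lt_of_le hs1 with h | h
    · simp [hf, h, Real.pi_pos.le]
    have hts : 0 < t - s := by linarith
    set b := (t - s)⁻¹ with hb
    have hbpos : 0 < b := inv_pos.mpr hts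
    have hrw : ∀ y : EuclideanSpace ℝ (Fin 2),
        Real.exp (-‖x - y‖ ^ 2 / (t - s)) = Real.exp (-b * ‖y - x‖ ^ 2) := by
      intro y
      rw [norm_sub_rev, neg_div, div_eq_inv_mul, ← hb, neg_mul]
    have hint2 : Integrable (fun y : EuclideanSpace ℝ (Fin 2) =>
        Real.exp (-b * ‖y - x‖ ^ 2)) := (gauss_int2 hbpos).comp_sub_right x
    have hI : (∫ y in Metric.ball (O s) r, Real.exp (-‖x - y‖ ^ 2 / (t - s)))
        ≤ Real.pi * (t - s) := by
      calc (∫ y in Metric.ball (O s) r, Real.exp (-‖x - y‖ ^ 2 / (t - s)))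
          = ∫ y in Metric.ball (O s) r, Real.exp (-b * ‖y - x‖ ^ 2) := by
            simp_rw [hrw]
        _ ≤ ∫ y : EuclideanSpace ℝ (Fin 2), Real.exp (-b * ‖y - x‖ ^ 2) :=
            setIntegral_le_integral hint2
              (Filter.Eventually.of_forall fun y => (Real.exp_pos _).le)
        _ = ∫ v : EuclideanSpace ℝ (Fin 2), Real.exp (-b * ‖v‖ ^ 2) :=
            integral_sub_right_eq_self (μ := volume) (fun v : EuclideanSpace ℝ (Fin 2) => Real.exp (-b * ‖v‖ ^ 2)) x
        _ = Real.pi / b := gauss_eval2 hbpos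
        _ = Real.pi * (t - s) := by rw [hb]; field_simp
    rw [hf]
    calc (∫ y in Metric.ball (O s) r, Real.exp (-‖x - y‖ ^ 2 / (t - s))) / (t - s)
        ≤ Real.pi * (t - s) / (t - s) := div_le_div_of_nonneg_right hI hts.le
      _ = Real.pi := by field_simp
  -- integrability of pieces
  have hα : (0:ℝ) ≤ t - η := by linarith
  have hu1 : Set.uIcc (0:ℝ) (t - η) ⊆ Set.uIcc 0 t :=
    Set.uIcc_subset_uIcc (by simp) (by rw [Set.uIcc_of_le ht.le]; constructor <;> linarith)
  have hu2 : Set.uIcc (t - η) t ⊆ Set.uIcc 0 t :=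
    Set.uIcc_subset_uIcc (by rw [Set.uIcc_of_le ht.le]; constructor <;> linarith) (by simp)
  have h1 : IntervalIntegrable f volume 0 (t - η) := hint.mono_set hu1
  have h2 : IntervalIntegrable f volume (t - η) t := hint.mono_set hu2
  have hg1 : IntervalIntegrable (fun s => Real.pi * r ^ 2 / (t - s)) volume 0 (t - η) := by
    apply ContinuousOn.intervalIntegrable
    apply continuousOn_const.div (by fun_prop)
    intro s hs
    rw [Set.uIcc_of_le hα] at hs
    have : s ≤ t - η := hs.2
    intro h0
    have : t - s = 0 := h0
    linarith
  have key1 : (∫ s in (0:ℝ)..(t - η), f s)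
      ≤ Real.pi * r ^ 2 * (Real.log t - Real.log η) := by
    have := intervalIntegral.integral_mono_on hα h1 hg1 bound1
    refine this.trans_eq ?_
    have hcomp : (∫ s in (0:ℝ)..(t - η), (t - s)⁻¹) = ∫ u in η..t, u⁻¹ := by
      have := intervalIntegral.integral_comp_sub_left (a := (0:ℝ)) (b := t - η)
        (fun u => u⁻¹) t
      simpa using this
    simp_rw [div_eq_mul_inv]
    rw [intervalIntegral.integral_const_mul, hcomp, integral_inv_of_pos hη0 ht,
      Real.log_div ht.ne' hη0.ne']
  have key2 : (∫ s in (t - η)..t, f s) ≤ Real.pi * η := by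
    have hc : IntervalIntegrable (fun _ : ℝ => Real.pi) volume (t - η) t :=
      intervalIntegrable_const
    have := intervalIntegral.integral_mono_on (by linarith) h2 hc bound2
    refine this.trans_eq ?_
    rw [intervalIntegral.integral_const]
    simp [smul_eq_mul]; ring
  calc (∫ s in (0:ℝ)..t, f s)
      = (∫ s in (0:ℝ)..(t - η), f s) + ∫ s in (t - η)..t, f s :=
        (intervalIntegral.integral_add_adjacent_intervals h1 h2).symm
    _ ≤ Real.pi * r ^ 2 * (Real.log t - Real.log η) + Real.pi * η :=
        add_le_add key1 key2
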